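/- Let n = 15, a = 7, b = 8, t = 2, and define A = {A ∈ C([15],7) : |A ∩ [7]| ≥ 4 and |A ∩ [9]| ≥ 5} and B = {B ∈ C([15],8) : |B ∩ [7]| ≥ 5 or |B ∩ [9]| ≥ 6}. Then A and B are cross-2-intersecting and |A| · |B| > N̂_prod(15, 7, 8, 2). -/

import Mathlib

open Finset

/-- The ground set `[n] = {1,…,n}`. -/
def gs (n : ℕ) : Finset ℕ := Finset.Icc 1 n

/-- `F` is an `m`-uniform family of subsets of `[n]`. -/
def UniformOn (n m : ℕ) (F : Finset (Finset ℕ)) : Prop :=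
  ∀ A ∈ F, A ⊆ gs n ∧ A.card = m

/-- `F` and `G` are cross-`t`-intersecting. -/
def CrossInt (t : ℕ) (F G : Finset (Finset ℕ)) : Prop :=
  ∀ A ∈ F, ∀ B ∈ G, t ≤ (A ∩ B).card

/-- The family `{A ∈ C([n],m) : |A ∩ [s]| ≥ u}` appearing in a Hirschorn pair. -/
def HirschF (n m s u : ℕ) : Finset (Finset ℕ) :=
  ((gs n).powersetCard m).filter (fun A => u ≤ (A ∩ gs s).card)

/-- The maximum of `|F| ⬝ |G|` over all Hirschorn pairs `(F, G)` with parameters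
`u, v, s ∈ [n]`, `u + v = s + t`. -/
noncomputable def NHatProd (n a b t : ℕ) : ℕ :=
  sSup {x : ℕ | ∃ u ∈ gs n, ∃ v ∈ gs n, ∃ s ∈ gs n, u + v = s + t ∧
    x = (HirschF n a s u).card * (HirschF n b s v).card}

/-! ### Auxiliary lemmas -/

lemma gs_card (k : ℕ) : (gs k).card = k := by simp [gs]

lemma gs_subset {s n : ℕ} (h : s ≤ n) : gs s ⊆ gs n := Finset.Icc_subset_Icc le_rfl h

lemma cross_helper (A B S : Finset ℕ) (p q : ℕ) (hA : p ≤ (A ∩ S).card)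
    (hB : q ≤ (B ∩ S).card) (hS : S.card + 2 ≤ p + q) : 2 ≤ (A ∩ B).card := by
  have h1 := Finset.card_inter_add_card_union (A ∩ S) (B ∩ S)
  have h2 : ((A ∩ S) ∪ (B ∩ S)).card ≤ S.card :=
    Finset.card_le_card (Finset.union_subset Finset.inter_subset_right Finset.inter_subset_right)
  have h3 : ((A ∩ S) ∩ (B ∩ S)).card ≤ (A ∩ B).card := by
    apply Finset.card_le_card; intro x hx
    simp only [Finset.mem_inter] at *; tauto
  omega

/-- Counting subsets of `G` of size `m` whose trace on `S ⊆ G` is a prescribed-size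
set satisfying `P`, via the bijection `A ↦ (A ∩ S, A \ S)`. -/
lemma card_slice (G S : Finset ℕ) (hSG : S ⊆ G) (m i : ℕ) (him : i ≤ m)
    (P : Finset ℕ → Prop) [DecidablePred P] :
    ((G.powersetCard m).filter (fun A => (A ∩ S).card = i ∧ P (A ∩ S))).card
      = ((S.powersetCard i).filter P).card * ((G.card - S.card).choose (m - i)) := by
  have key : ((G.powersetCard m).filter (fun A => (A ∩ S).card = i ∧ P (A ∩ S))).card
      = (((S.powersetCard i).filter P) ×ˢ ((G \ S).powersetCard (m - i))).card := by
    apply Finset.card_bij' (fun A _ => (A ∩ S, A \ S)) (fun p _ => p.1 ∪ p.2)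
    · intro A hA
      simp only [Finset.mem_filter, Finset.mem_powersetCard, Finset.mem_product] at hA ⊢
      obtain ⟨⟨hAG, hAm⟩, hci, hP⟩ := hA
      have hc := Finset.card_inter_add_card_sdiff A S
      exact ⟨⟨⟨Finset.inter_subset_right, hci⟩, hP⟩,
        Finset.sdiff_subset_sdiff hAG le_rfl, by omega⟩
    · intro p hp
      simp only [Finset.mem_filter, Finset.mem_powersetCard, Finset.mem_product] at hp ⊢
      obtain ⟨⟨⟨hXS, hXi⟩, hP⟩, hYG, hYj⟩ := hp
      have hdisj : Disjoint p.1 p.2 := by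
        rw [Finset.disjoint_left]
        intro a ha hb
        exact (Finset.mem_sdiff.mp (hYG hb)).2 (hXS ha)
      have hXeq : (p.1 ∪ p.2) ∩ S = p.1 := by
        rw [Finset.union_inter_distrib_right, Finset.inter_eq_left.mpr hXS]
        have : p.2 ∩ S = ∅ := by
          rw [Finset.eq_empty_iff_forall_notMem]
          intro a ha
          obtain ⟨ha2, haS⟩ := Finset.mem_inter.mp ha
          exact (Finset.mem_sdiff.mp (hYG ha2)).2 haS
        rw [this, Finset.union_empty]
      refine ⟨⟨Finset.union_subset (hXS.trans hSG) (hYG.trans (Finset.sdiff_subset)), ?_⟩, ?_, ?_⟩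
      · rw [Finset.card_union_of_disjoint hdisj, hXi, hYj]; omega
      · rw [hXeq]; exact hXi
      · rw [hXeq]; exact hP
    · intro A hA
      rw [Finset.union_comm]; exact Finset.sdiff_union_inter A S
    · intro p hp
      simp only [Finset.mem_filter, Finset.mem_powersetCard, Finset.mem_product] at hp
      obtain ⟨⟨⟨hXS, hXi⟩, hP⟩, hYG, hYj⟩ := hp
      have hXeq : (p.1 ∪ p.2) ∩ S = p.1 := by
        rw [Finset.union_inter_distrib_right, Finset.inter_eq_left.mpr hXS]
        have : p.2 ∩ S = ∅ := by
          rw [Finset.eq_empty_iff_forall_notMem]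
          intro a ha
          obtain ⟨ha2, haS⟩ := Finset.mem_inter.mp ha
          exact (Finset.mem_sdiff.mp (hYG ha2)).2 haS
        rw [this, Finset.union_empty]
      have hYeq : (p.1 ∪ p.2) \ S = p.2 := by
        rw [Finset.union_sdiff_distrib]
        have h1 : p.1 \ S = ∅ := Finset.sdiff_eq_empty_iff_subset.mpr hXS
        have h2 : p.2 \ S = p.2 := by
          rw [Finset.sdiff_eq_self_iff_disjoint, Finset.disjoint_left]
          intro a ha
          exact (Finset.mem_sdiff.mp (hYG ha)).2
        rw [h1, h2, Finset.empty_union]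
      exact Prod.ext hXeq hYeq
  rw [key, Finset.card_product, Finset.card_powersetCard, Finset.card_sdiff_of_subset hSG]

/-- Fiberwise decomposition of a filtered `powersetCard` according to `|A ∩ S|`. -/
lemma card_filter_sum (G S : Finset ℕ) (m : ℕ) (p : Finset ℕ → Prop) [DecidablePred p] :
    ((G.powersetCard m).filter p).card
      = ∑ i ∈ Finset.range (m + 1),
          ((G.powersetCard m).filter (fun A => (A ∩ S).card = i ∧ p A)).card := by
  rw [Finset.card_eq_sum_card_fiberwise (f := fun A => (A ∩ S).card)
    (t := Finset.range (m + 1)) (fun A hA => by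
      simp only [Finset.mem_coe, Finset.mem_filter, Finset.mem_powersetCard] at hA
      have := Finset.card_le_card (Finset.inter_subset_left : A ∩ S ⊆ A)
      simp only [Finset.mem_coe, Finset.mem_range]; omega)]
  apply Finset.sum_congr rfl
  intro i _
  congr 1
  rw [Finset.filter_filter]
  exact Finset.filter_congr (fun A _ => by tauto)

/-- The cardinality of a Hirschorn family as a sum of products of binomials. -/
lemma hirsch_card (m s u : ℕ) (hs : s ≤ 15) :
    (HirschF 15 m s u).card
      = ∑ i ∈ Finset.range (m + 1),
          (if u ≤ i then (Nat.choose s i) * (Nat.choose (15 - s) (m - i)) else 0) := by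
  unfold HirschF
  rw [card_filter_sum (gs 15) (gs s) m (fun A => u ≤ (A ∩ gs s).card)]
  apply Finset.sum_congr rfl
  intro i hi
  have him : i ≤ m := Nat.lt_succ_iff.mp (Finset.mem_range.mp hi)
  by_cases hui : u ≤ i
  · rw [if_pos hui]
    have heq : (((gs 15).powersetCard m).filter
          (fun A => (A ∩ gs s).card = i ∧ u ≤ (A ∩ gs s).card))
        = ((gs 15).powersetCard m).filter
          (fun A => (A ∩ gs s).card = i ∧ (fun _ : Finset ℕ => True) (A ∩ gs s)) :=
      Finset.filter_congr (fun A _ => by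
        constructor
        · rintro ⟨h1, _⟩; exact ⟨h1, trivial⟩
        · rintro ⟨h1, _⟩; exact ⟨h1, by omega⟩)
    refine (congrArg Finset.card heq).trans
      ((card_slice (gs 15) (gs s) (gs_subset hs) m i him (fun _ => True)).trans ?_)
    simp [Finset.card_powersetCard, gs_card]
  · rw [if_neg hui]
    rw [Finset.card_eq_zero, Finset.filter_eq_empty_iff]
    rintro A _ ⟨h1, h2⟩
    omega

/-- The cardinality of a family defined by conditions on `|A ∩ [7]|` and `|A ∩ [9]|`
as a double sum of products of binomials. -/
lemma card_two (m : ℕ) (Q : ℕ → ℕ → Prop) [∀ i k, Decidable (Q i k)] :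
    (((gs 15).powersetCard m).filter (fun A => Q (A ∩ gs 7).card (A ∩ gs 9).card)).card
      = ∑ k ∈ Finset.range (m + 1), ∑ i ∈ Finset.range (k + 1),
          (if Q i k then (Nat.choose 7 i) * (Nat.choose 2 (k - i)) * (Nat.choose 6 (m - k))
           else 0) := by
  have h97 : gs 9 ∩ gs 7 = gs 7 := Finset.inter_eq_right.mpr (gs_subset (by norm_num))
  rw [card_filter_sum (gs 15) (gs 9) m (fun A => Q (A ∩ gs 7).card (A ∩ gs 9).card)]
  apply Finset.sum_congr rfl
  intro k hk
  have hkm : k ≤ m := Nat.lt_succ_iff.mp (Finset.mem_range.mp hk)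
  have heq : (((gs 15).powersetCard m).filter
        (fun A => (A ∩ gs 9).card = k ∧ Q (A ∩ gs 7).card (A ∩ gs 9).card))
      = ((gs 15).powersetCard m).filter
        (fun A => (A ∩ gs 9).card = k ∧ (fun X : Finset ℕ => Q (X ∩ gs 7).card k) (A ∩ gs 9)) := by
    apply Finset.filter_congr
    intro A _
    simp only [Finset.inter_assoc, h97]
    constructor <;> (rintro ⟨h1, h2⟩; subst h1; exact ⟨rfl, h2⟩)
  refine (congrArg Finset.card heq).trans
    ((card_slice (gs 15) (gs 9) (gs_subset (by norm_num)) m k hkm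
      (fun X => Q (X ∩ gs 7).card k)).trans ?_)
  rw [gs_card, gs_card,
    card_filter_sum (gs 9) (gs 7) k (fun X => Q (X ∩ gs 7).card k), Finset.sum_mul]
  apply Finset.sum_congr rfl
  intro i hi
  have hik : i ≤ k := Nat.lt_succ_iff.mp (Finset.mem_range.mp hi)
  have heq2 : (((gs 9).powersetCard k).filter
        (fun X => (X ∩ gs 7).card = i ∧ Q (X ∩ gs 7).card k))
      = ((gs 9).powersetCard k).filter
        (fun X => (X ∩ gs 7).card = i ∧ (fun _ : Finset ℕ => Q i k) (X ∩ gs 7)) :=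
    Finset.filter_congr (fun X _ => by
      constructor <;> (rintro ⟨h1, h2⟩; subst h1; exact ⟨rfl, h2⟩))
  have einner : (((gs 9).powersetCard k).filter
        (fun X => (X ∩ gs 7).card = i ∧ Q (X ∩ gs 7).card k)).card
      = if Q i k then (Nat.choose 7 i) * (Nat.choose 2 (k - i)) else 0 := by
    refine (congrArg Finset.card heq2).trans
      ((card_slice (gs 9) (gs 7) (gs_subset (by norm_num)) k i hik (fun _ => Q i k)).trans ?_)
    by_cases hQ : Q i k
    · rw [if_pos hQ, Finset.filter_true_of_mem (fun _ _ => hQ), Finset.card_powersetCard]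
      simp [gs_card]
    · rw [if_neg hQ, Finset.filter_false_of_mem (fun _ _ => hQ)]
      simp
  rw [einner]
  by_cases hQ : Q i k
  · simp [hQ, Nat.mul_assoc]
  · simp [hQ]

/-- Numerical bound on all Hirschorn products, by `decide`. -/
lemma key_bound : ∀ s < 16, ∀ u < 16, ∀ v < 16, u + v = s + 2 →
    (∑ i ∈ Finset.range 8,
        (if u ≤ i then (Nat.choose s i) * (Nat.choose (15 - s) (7 - i)) else 0)) *
    (∑ i ∈ Finset.range 9,
        (if v ≤ i then (Nat.choose s i) * (Nat.choose (15 - s) (8 - i)) else 0))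
      ≤ 3608550 := by decide

set_option maxRecDepth 100000 in
/-- a concrete counterexample to Hirschorn's conjecture for
`n = 15`, `a = 7`, `b = 8`, `t = 2`. -/
theorem concrete_counterexample :
    CrossInt 2
      (((gs 15).powersetCard 7).filter
        (fun A => 4 ≤ (A ∩ gs 7).card ∧ 5 ≤ (A ∩ gs 9).card))
      (((gs 15).powersetCard 8).filter
        (fun B => 5 ≤ (B ∩ gs 7).card ∨ 6 ≤ (B ∩ gs 9).card)) ∧
    NHatProd 15 7 8 2 <
      (((gs 15).powersetCard 7).filter
        (fun A => 4 ≤ (A ∩ gs 7).card ∧ 5 ≤ (A ∩ gs 9).card)).card *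
      (((gs 15).powersetCard 8).filter
        (fun B => 5 ≤ (B ∩ gs 7).card ∨ 6 ≤ (B ∩ gs 9).card)).card := by
  constructor
  · intro A hA B hB
    simp only [Finset.mem_filter, Finset.mem_powersetCard] at hA hB
    obtain ⟨-, h47, h59⟩ := hA
    obtain ⟨-, hB79⟩ := hB
    rcases hB79 with h5 | h6
    · exact cross_helper A B (gs 7) 4 5 h47 h5 (by rw [gs_card])
    · exact cross_helper A B (gs 9) 5 6 h59 h6 (by rw [gs_card])
  · have hA : (((gs 15).powersetCard 7).filter
        (fun A => 4 ≤ (A ∩ gs 7).card ∧ 5 ≤ (A ∩ gs 9).card)).card = 1905 :=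
      (card_two 7 (fun i k => 4 ≤ i ∧ 5 ≤ k)).trans (by decide)
    have hB : (((gs 15).powersetCard 8).filter
        (fun B => 5 ≤ (B ∩ gs 7).card ∨ 6 ≤ (B ∩ gs 9).card)).card = 1905 :=
      (card_two 8 (fun i k => 5 ≤ i ∨ 6 ≤ k)).trans (by decide)
    rw [hA, hB]
    have hsup : NHatProd 15 7 8 2 ≤ 3608550 := by
      unfold NHatProd
      apply csSup_le'
      rintro x ⟨u, hu, v, hv, s, hs, huv, rfl⟩
      simp only [gs, Finset.mem_Icc] at hu hv hs
      rw [hirsch_card 7 s u hs.2, hirsch_card 8 s v hs.2]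
      exact key_bound s (by omega) u (by omega) v (by omega) huv
    omega
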